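/- arXiv:1201.3271 — 2 statements merged into one kernel-verified Lean document; each statement's English description precedes it below -/
import Mathlib

section
/- Let n,k ≥ 2 be integers, let G be a vertex-minimal graph with no odd cycles of length at most 2k-1 and chromatic number greater than n, and let d = max_{v ∈ V} |U_{k-1}(v,G)|. Then the number of vertices of G satisfies |V| ≥ f(n-1,k) + d + 1. -/
/-- `G` contains no odd cycle of length at most `2k-1`. -/
def NoShortOddCycles {V : Type} (G : SimpleGraph V) (k : ℕ) : Prop :=
  ∀ (v : V) (w : G.Walk v v), w.IsCycle → Odd w.length → 2 * k - 1 < w.length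

/-- `f n k` : the largest `f` such that every finite graph with at most `f` vertices
containing no odd cycle of length at most `2k-1` is properly `n`-colorable. -/
noncomputable def fOdd (n k : ℕ) : ℕ :=
  sSup {f : ℕ | ∀ (V : Type) (_ : Fintype V) (G : SimpleGraph V),
    NoShortOddCycles G k → Fintype.card V ≤ f → G.Colorable n}
/-- The ball of radius `r` around `v` in `G`. -/
noncomputable def ball {V : Type} [Fintype V] (G : SimpleGraph V) (v : V) (r : ℕ) : Finset V :=
  Finset.univ.filter (fun u => G.dist v u ≤ r)

open SimpleGraph hiding ball

/-- A closed walk of positive duplicate count at the base splits into two shorter closed walks. -/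
lemma splitClosedCons {V : Type} {G : SimpleGraph V} [DecidableEq V] {x y : V}
    (h : G.Adj x y) (q : G.Walk y x) (hx : 1 < q.support.count x) :
    ∃ (w1 w2 : G.Walk x x), w1.length + w2.length = q.length + 1 ∧
      1 ≤ w1.length ∧ 1 ≤ w2.length := by
  have hmem : x ∈ q.support := List.count_pos_iff.mp (by omega)
  refine ⟨Walk.cons h (q.takeUntil x hmem), q.dropUntil x hmem, ?_, by simp, ?_⟩
  · have := congrArg Walk.length (q.take_spec hmem)
    rw [Walk.length_append] at this
    simp [Walk.length_cons]; omega
  · have hsupp := congrArg (fun l => List.count x l) (congrArg Walk.support (q.take_spec hmem))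
    rw [Walk.support_append] at hsupp
    simp only [List.count_append] at hsupp
    have h1 : ((q.takeUntil x hmem).support.count x) = 1 :=
      q.count_support_takeUntil_eq_one hmem
    have h2 : 1 ≤ ((q.dropUntil x hmem).support.tail.count x) := by omega
    have h3 : (q.dropUntil x hmem).support.tail ≠ [] := by
      intro hnil; rw [hnil] at h2; simp at h2
    have h4 := Walk.length_support (q.dropUntil x hmem)
    have h5 : (q.dropUntil x hmem).support.tail.length =
        (q.dropUntil x hmem).support.length - 1 := by simp
    have := List.length_pos_iff.mpr h3
    omega

/-- Every closed walk of odd length contains an odd cycle of at most the same length. -/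
lemma exists_odd_cycle_aux {V : Type} {G : SimpleGraph V} :
    ∀ (m : ℕ) {v : V} (w : G.Walk v v), Odd w.length → w.length ≤ m →
    ∃ (u : V) (c : G.Walk u u), c.IsCycle ∧ Odd c.length ∧ c.length ≤ w.length := by
  classical
  intro m
  induction m with
  | zero =>
    intro v w hodd hle
    rw [Nat.le_zero] at hle
    rw [hle] at hodd
    simp [Nat.odd_iff] at hodd
  | succ m ih =>
    intro v w hodd hle
    by_cases hnd : w.support.tail.Nodup
    · cases w with
      | nil => simp [Nat.odd_iff] at hodd
      | @cons _ b _ h q =>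
        have hq : q.IsPath := Walk.IsPath.mk' (by simpa using hnd)
        by_cases he : s(v, b) ∈ q.edges
        · -- the edge is repeated; show length = 2, contradicting oddness
          exfalso
          cases q with
          | nil => simp at he
          | @cons _ z _ h' r =>
            rw [Walk.edges_cons, List.mem_cons] at he
            rcases he with he | he
            · -- s(v,b) = s(b,z): z = v, r : Walk v v path → nil, total length 2
              have hvb : v ≠ b := G.ne_of_adj h
              have hz : z = v := by
                rcases Sym2.eq_iff.mp he with ⟨h1, h2⟩ | ⟨h1, h2⟩
                · exact absurd h1 hvb
                · exact h1.symm
              subst hz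
              have hr : r.IsPath := ((Walk.cons_isPath_iff h' r).mp hq).1
              have : r = Walk.nil := Walk.isPath_iff_eq_nil.mp hr
              subst this
              simp [Nat.odd_iff] at hodd
            · -- b would appear in r.support, contradicting path
              have hb : b ∈ r.support := Walk.snd_mem_support_of_mem_edges r he
              exact ((Walk.cons_isPath_iff h' r).mp hq).2 hb
        · exact ⟨v, Walk.cons h q, (Walk.cons_isCycle_iff q h).mpr ⟨hq, he⟩, hodd, le_rfl⟩
    · -- a vertex repeats: split into two shorter closed walks
      rw [List.nodup_iff_count_le_one] at hnd
      push_neg at hnd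
      obtain ⟨x, hx2⟩ := hnd
      have hxt : x ∈ w.support.tail := List.count_pos_iff.mp (by omega)
      have hxs : x ∈ w.support := List.mem_of_mem_tail hxt
      have hlenrot : (w.rotate x hxs).length = w.length := by
        have h1 := congrArg Walk.length (w.take_spec hxs)
        rw [Walk.length_append] at h1
        simp only [Walk.rotate, Walk.length_append]
        omega
      have hcount : 1 < (w.rotate x hxs).support.tail.count x := by
        have hperm := (w.support_rotate x hxs).perm
        rw [hperm.count_eq]
        omega
      obtain ⟨y, h', q', hq'⟩ : ∃ (y : V) (h' : G.Adj x y) (q' : G.Walk y x),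
          w.rotate x hxs = Walk.cons h' q' := by
        cases hc : w.rotate x hxs with
        | nil => rw [hc] at hcount; simp at hcount
        | cons h' q' => exact ⟨_, h', q', rfl⟩
      rw [hq'] at hcount hlenrot
      have hcq : 1 < q'.support.count x := by simpa using hcount
      obtain ⟨w1, w2, hsum, h1, h2⟩ := splitClosedCons h' q' hcq
      have hsum' : w1.length + w2.length = w.length := by
        rw [hsum]; simpa using hlenrot
      rcases Nat.even_or_odd w1.length with hev | hod
      · have hodd2 : Odd w2.length := by
          rw [Nat.odd_iff] at hodd ⊢; rw [Nat.even_iff] at hev; omega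
        obtain ⟨u, c, hc1, hc2, hc3⟩ := ih w2 hodd2 (by omega)
        exact ⟨u, c, hc1, hc2, by omega⟩
      · obtain ⟨u, c, hc1, hc2, hc3⟩ := ih w1 hod (by omega)
        exact ⟨u, c, hc1, hc2, by omega⟩

lemma noShort_induce {V : Type} {G : SimpleGraph V} {k : ℕ}
    (hG : NoShortOddCycles G k) (s : Set V) : NoShortOddCycles (G.induce s) k := by
  intro v w hcyc hodd
  have hinj : Function.Injective (SimpleGraph.Embedding.induce (G := G) s) :=
    (SimpleGraph.Embedding.induce (G := G) s).injective
  have hmap := hG v ((w.map (SimpleGraph.Embedding.induce (G := G) s).toHom))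
    (hcyc.map hinj) (cast (congrArg Odd (Walk.length_map (Embedding.induce (G := G) s).toHom w)).symm hodd)
  exact lt_of_lt_of_eq hmap (Walk.length_map (Embedding.induce (G := G) s).toHom w)

lemma exists_odd_cycle_aux' {V : Type} {G : SimpleGraph V}
    {v : V} (w : G.Walk v v) (hodd : Odd w.length) :
    ∃ (u : V) (c : G.Walk u u), c.IsCycle ∧ Odd c.length ∧ c.length ≤ w.length :=
  exists_odd_cycle_aux w.length w hodd le_rfl

lemma keyLemma {V : Type} [Fintype V] {G : SimpleGraph V} {n k : ℕ}
    (hn : 2 ≤ n) (hk : 2 ≤ k)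
    (hG : NoShortOddCycles G k) (hchr : ¬ G.Colorable n)
    (hmin : ∀ (W : Type) (_ : Fintype W) (H : SimpleGraph W),
      NoShortOddCycles H k → Fintype.card W < Fintype.card V → H.Colorable n)
    (v₀ : V) :
    ¬ (G.induce {u : V | ¬ G.dist v₀ u ≤ k - 1}).Colorable (n - 1) := by
  classical
  rintro ⟨c₁⟩
  set Rs : Set V := {u : V | ¬ G.Reachable v₀ u} with hRs
  have hcardR : Fintype.card ↥Rs < Fintype.card V := by
    apply Fintype.card_subtype_lt (x := v₀)
    simp only [hRs, Set.mem_setOf_eq, not_not]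
    exact Reachable.refl v₀
  obtain ⟨c₂⟩ := hmin ↥Rs inferInstance (G.induce Rs) (noShort_induce hG Rs) hcardR
  -- the extended coloring
  set F : V → Fin n := fun u =>
    if hr : G.Reachable v₀ u then
      if hb : G.dist v₀ u ≤ k - 1 then
        (if (G.dist v₀ u) % 2 = (k - 1) % 2 then ⟨n - 1, by omega⟩ else ⟨0, by omega⟩)
      else Fin.castLE (by omega) (c₁ ⟨u, hb⟩)
    else c₂ ⟨u, hr⟩ with hF
  have hvalid : ∀ {u w : V}, G.Adj u w → F u ≠ F w := by
    intro u w hadj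
    by_cases hr : G.Reachable v₀ u
    · have hrw : G.Reachable v₀ w := hr.trans hadj.reachable
      -- distance facts
      have hd1 : G.dist v₀ w ≤ G.dist v₀ u + 1 := by
        obtain ⟨p, hp⟩ := hr.exists_walk_length_eq_dist
        have := G.dist_le (p.concat hadj)
        rwa [Walk.length_concat, hp] at this
      have hd2 : G.dist v₀ u ≤ G.dist v₀ w + 1 := by
        obtain ⟨p, hp⟩ := hrw.exists_walk_length_eq_dist
        have := G.dist_le (p.concat hadj.symm)
        rwa [Walk.length_concat, hp] at this
      have hne : G.dist v₀ u ≤ k - 1 ∨ G.dist v₀ w ≤ k - 1 →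
          G.dist v₀ u ≠ G.dist v₀ w := by
        intro hsmall heq
        obtain ⟨p, hp⟩ := hr.exists_walk_length_eq_dist
        obtain ⟨q, hq⟩ := hrw.exists_walk_length_eq_dist
        set W := p.append (Walk.cons hadj q.reverse) with hW
        have hWlen : W.length = 2 * G.dist v₀ u + 1 := by
          rw [hW, Walk.length_append, Walk.length_cons, Walk.length_reverse, hp, hq, ← heq]
          omega
        have hWodd : Odd W.length := by rw [hWlen]; exact ⟨G.dist v₀ u, by omega⟩
        obtain ⟨x, c, hc1, hc2, hc3⟩ := exists_odd_cycle_aux' W hWodd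
        have := hG x c hc1 hc2
        rcases hsmall with hs | hs
        · omega
        · rw [heq] at hWlen; omega
      simp only [hF, dif_pos hr, dif_pos hrw]
      by_cases hbu : G.dist v₀ u ≤ k - 1 <;> by_cases hbw : G.dist v₀ w ≤ k - 1
      · -- both in the ball: parity colors differ
        have hneq := hne (Or.inl hbu)
        simp only [dif_pos hbu, dif_pos hbw]
        by_cases hpu : (G.dist v₀ u) % 2 = (k - 1) % 2
        · have hpw : ¬ (G.dist v₀ w) % 2 = (k - 1) % 2 := by omega
          simp only [if_pos hpu, if_neg hpw]
          simp [Fin.ext_iff]; omega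
        · have hpw : (G.dist v₀ w) % 2 = (k - 1) % 2 := by omega
          simp only [if_neg hpu, if_pos hpw]
          simp [Fin.ext_iff]; omega
      · -- u at the boundary, w outside
        have hu : G.dist v₀ u = k - 1 := by omega
        have hpu : (G.dist v₀ u) % 2 = (k - 1) % 2 := by rw [hu]
        simp only [dif_pos hbu, dif_neg hbw, if_pos hpu]
        intro hcon
        have hv := congrArg Fin.val hcon
        simp at hv
        have hlt := (c₁ ⟨w, hbw⟩).isLt
        omega
      · have hw' : G.dist v₀ w = k - 1 := by omega
        have hpw : (G.dist v₀ w) % 2 = (k - 1) % 2 := by rw [hw']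
        simp only [dif_neg hbu, dif_pos hbw, if_pos hpw]
        intro hcon
        have hv := congrArg Fin.val hcon
        simp at hv
        have hlt := (c₁ ⟨u, hbu⟩).isLt
        omega
      · -- both outside: use c₁
        simp only [dif_neg hbu, dif_neg hbw]
        have hadj' : (G.induce {u : V | ¬ G.dist v₀ u ≤ k - 1}).Adj ⟨u, hbu⟩ ⟨w, hbw⟩ := by
          simp [hadj]
        intro hcon
        exact c₁.valid hadj' (Fin.castLE_injective _ hcon)
    · have hrw : ¬ G.Reachable v₀ w := fun hw => hr (hw.trans hadj.symm.reachable)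
      simp only [hF, dif_neg hr, dif_neg hrw]
      have hadj' : (G.induce Rs).Adj ⟨u, hr⟩ ⟨w, hrw⟩ := by simp [hadj]
      exact c₂.valid hadj'
  exact hchr ⟨Coloring.mk F hvalid⟩

theorem stmt_6 {V : Type} [Fintype V] (G : SimpleGraph V) (n k : ℕ)
    (hn : 2 ≤ n) (hk : 2 ≤ k)
    (hG : NoShortOddCycles G k) (hchr : ¬ G.Colorable n)
    (hmin : ∀ (W : Type) (_ : Fintype W) (H : SimpleGraph W),
      NoShortOddCycles H k → Fintype.card W < Fintype.card V → H.Colorable n)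
    (d : ℕ) (hd : d = Finset.univ.sup (fun v : V => (ball G v (k - 1)).card)) :
    fOdd (n - 1) k + d + 1 ≤ Fintype.card V := by
  classical
  have hVne : Nonempty V := by
    by_contra h
    rw [not_nonempty_iff] at h
    exact hchr (Colorable.of_isEmpty (G := G) (n := n))
  obtain ⟨v₀, -, hv₀⟩ := Finset.exists_mem_eq_sup (Finset.univ : Finset V)
    Finset.univ_nonempty (fun v : V => (ball G v (k - 1)).card)
  have hdval : d = (ball G v₀ (k - 1)).card := by rw [hd, hv₀]
  set s : Set V := {u : V | ¬ G.dist v₀ u ≤ k - 1} with hs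
  have hkey : ¬ (G.induce s).Colorable (n - 1) := keyLemma hn hk hG hchr hmin v₀
  have hcards : Fintype.card ↥s = Fintype.card V - d := by
    have h1 : s.toFinset = (ball G v₀ (k - 1))ᶜ := by
      ext u
      simp [hs, ball]
    have h2 : s.toFinset.card = Fintype.card ↥s := Set.toFinset_card s
    rw [← h2, h1, Finset.card_compl, hdval]
  have hdle : d ≤ Fintype.card V := by
    rw [hdval]
    exact (ball G v₀ (k - 1)).card_le_univ.trans (le_of_eq (Finset.card_univ))
  have hpos : 1 ≤ Fintype.card V - d := by
    by_contra hcon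
    push_neg at hcon
    have : Fintype.card ↥s = 0 := by omega
    haveI : IsEmpty ↥s := Fintype.card_eq_zero_iff.mp this
    exact hkey (Colorable.of_isEmpty (G := G.induce s) (n := n - 1))
  have h0mem : (0 : ℕ) ∈ {f : ℕ | ∀ (V : Type) (_ : Fintype V) (G : SimpleGraph V),
      NoShortOddCycles G k → Fintype.card V ≤ f → G.Colorable (n - 1)} := by
    intro W hW H hns hcard
    haveI : IsEmpty W := Fintype.card_eq_zero_iff.mp (Nat.le_zero.mp hcard)
    exact Colorable.of_isEmpty (G := H) (n := n - 1)
  have hub : ∀ f ∈ {f : ℕ | ∀ (V : Type) (_ : Fintype V) (G : SimpleGraph V),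
      NoShortOddCycles G k → Fintype.card V ≤ f → G.Colorable (n - 1)},
      f ≤ Fintype.card V - d - 1 := by
    intro f hf
    by_contra hcon
    push_neg at hcon
    have hle : Fintype.card V - d ≤ f := by omega
    exact hkey (hf ↥s inferInstance (G.induce s) (noShort_induce hG s) (by omega))
  have hsup : fOdd (n - 1) k ≤ Fintype.card V - d - 1 := by
    rw [fOdd]
    exact csSup_le ⟨0, h0mem⟩ hub
  omega
end

section
/- Let n,k ≥ 2 be integers, G a vertex-minimal graph with no odd cycles of length ≤ 2k-1 and chromatic number > n, and d = max_v |U_{k-1}(v,G)|. Then |V(G)| ≥ (d^{1/(k-1)} / (d^{1/(k-1)} - 1)) · (f(n-2,k) + 1). -/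
open SimpleGraph hiding ball

lemma walk_length_rotate {V : Type} {G : SimpleGraph V} [DecidableEq V] {v u : V}
    (c : G.Walk v v) (h : u ∈ c.support) : (c.rotate u h).length = c.length := by
  have h1 := congr_arg Walk.length (c.take_spec h)
  rw [Walk.length_append] at h1
  simp only [Walk.rotate, Walk.length_append]
  omega

lemma exists_odd_cycle {V : Type} {G : SimpleGraph V} :
    ∀ (N : ℕ) {v : V} (w : G.Walk v v), Odd w.length → w.length ≤ N →
      ∃ (u : V) (c : G.Walk u u), c.IsCycle ∧ Odd c.length ∧ c.length ≤ w.length := by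
  classical
  intro N
  induction N with
  | zero =>
    intro v w ho hl
    rw [Nat.le_zero] at hl
    rw [hl] at ho
    exact absurd ho (by decide)
  | succ N ih =>
    intro v w ho hl
    by_cases hnd : w.support.tail.Nodup
    · cases w with
      | nil => simp at ho
      | @cons _ y _ h p =>
        rw [Walk.support_cons, List.tail_cons] at hnd
        have hp : p.IsPath := Walk.IsPath.mk' hnd
        have he : s(v, y) ∉ p.edges := by
          intro he
          cases p with
          | nil => simp at he
          | @cons _ z _ h' p₂ =>
            rw [Walk.edges_cons, List.mem_cons] at he
            rcases he with heq | hmem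
            · rw [Sym2.eq_iff] at heq
              rcases heq with ⟨hvy, -⟩ | ⟨hvz, -⟩
              · exact h.ne hvy
              · subst hvz
                have hp₂ : p₂.IsPath := (Walk.cons_isPath_iff _ _).1 hp |>.1
                have : p₂ = Walk.nil := Walk.isPath_iff_eq_nil.1 hp₂
                subst this
                simp only [Walk.length_cons, Walk.length_nil] at ho
                exact absurd ho (by decide)
            · have hy : y ∈ p₂.support := Walk.snd_mem_support_of_mem_edges _ hmem
              have := (Walk.cons_isPath_iff _ _).1 hp |>.2
              exact this hy
        exact ⟨v, Walk.cons h p, (Walk.cons_isCycle_iff p h).2 ⟨hp, he⟩, ho, le_rfl⟩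
    · obtain ⟨x, hdup⟩ := List.exists_duplicate_iff_not_nodup.2 hnd
      have hcnt : 2 ≤ w.support.tail.count x := List.duplicate_iff_two_le_count.1 hdup
      have hx : x ∈ w.support := List.mem_of_mem_tail hdup.mem
      have hlenrot : (w.rotate x hx).length = w.length := walk_length_rotate w hx
      have hcnt' : 2 ≤ (w.rotate x hx).support.tail.count x := by
        rw [(Walk.support_rotate w x hx).perm.count_eq]
        exact hcnt
      cases hw' : w.rotate x hx with
      | nil =>
        rw [hw'] at hlenrot
        simp only [Walk.length_nil] at hlenrot
        rw [← hlenrot] at ho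
        exact absurd ho (by decide)
      | @cons _ z _ h2 p2 =>
        rw [hw'] at hlenrot hcnt'
        rw [Walk.support_cons, List.tail_cons] at hcnt'
        have hx2 : x ∈ p2.support := by
          have : 0 < p2.support.count x := by omega
          exact List.count_pos_iff.1 this
        have hspec := p2.take_spec hx2
        have hlsum : (p2.takeUntil x hx2).length + (p2.dropUntil x hx2).length = p2.length := by
          have := congr_arg Walk.length hspec
          rwa [Walk.length_append] at this
        have hdrop1 : 1 ≤ (p2.dropUntil x hx2).length := by
          by_contra hz
          push_neg at hz
          interval_cases hz2 : (p2.dropUntil x hx2).length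
          have hnil : p2.dropUntil x hx2 = Walk.nil := by
            cases hd : p2.dropUntil x hx2 with
            | nil => rfl
            | cons _ _ => rw [hd] at hz2; simp at hz2
          rw [hnil] at hspec
          have : p2.support.count x = 1 := by
            rw [← hspec, Walk.append_nil]
            exact Walk.count_support_takeUntil_eq_one p2 hx2
          omega
        have htot : ((p2.takeUntil x hx2).length + 1) + (p2.dropUntil x hx2).length = w.length := by
          have : w.length = p2.length + 1 := by
            rw [← hlenrot, Walk.length_cons]
          omega
        rcases Nat.even_or_odd ((Walk.cons h2 (p2.takeUntil x hx2)).length) with hev | hod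
        · -- drop part is odd
          have hod2 : Odd (p2.dropUntil x hx2).length := by
            rw [Walk.length_cons] at hev
            rcases ho with ⟨t, ht⟩
            rcases hev with ⟨s, hs⟩
            exact ⟨t - s, by omega⟩
          obtain ⟨u, c, hc, hco, hcl⟩ := ih (p2.dropUntil x hx2) hod2 (by omega)
          exact ⟨u, c, hc, hco, by omega⟩
        · have hlen1 : (Walk.cons h2 (p2.takeUntil x hx2)).length ≤ N := by
            rw [Walk.length_cons]; omega
          obtain ⟨u, c, hc, hco, hcl⟩ := ih (Walk.cons h2 (p2.takeUntil x hx2)) hod hlen1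
          refine ⟨u, c, hc, hco, ?_⟩
          rw [Walk.length_cons] at hcl
          omega

lemma fOdd_spec {p k t : ℕ} (ht : t ≤ fOdd p k) :
    ∀ (W : Type) (_ : Fintype W) (H : SimpleGraph W), NoShortOddCycles H k →
      Fintype.card W ≤ t → H.Colorable p := by
  classical
  set S : Set ℕ := {f : ℕ | ∀ (V : Type) (_ : Fintype V) (G : SimpleGraph V),
    NoShortOddCycles G k → Fintype.card V ≤ f → G.Colorable p} with hS
  have hdc : ∀ a b : ℕ, a ≤ b → b ∈ S → a ∈ S := by
    intro a b hab hb W fW H hH hc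
    exact hb W fW H hH (hc.trans hab)
  have h0 : (0 : ℕ) ∈ S := by
    intro W fW H hH hc
    rw [Nat.le_zero] at hc
    have : IsEmpty W := Fintype.card_eq_zero_iff.1 hc
    exact ⟨SimpleGraph.Coloring.mk (fun w => isEmptyElim w) (fun {a b} _ => isEmptyElim a)⟩
  by_cases hbdd : BddAbove S
  · have hsup : sSup S ∈ S := Nat.sSup_mem ⟨0, h0⟩ hbdd
    exact hdc t _ ht hsup
  · obtain ⟨f, hfS, hf⟩ := not_bddAbove_iff.1 hbdd t
    exact hdc t f hf.le hfS

open scoped Classical in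
noncomputable def sWalkBall {V : Type} (G : SimpleGraph V) (s : Finset V) (v : V) (r : ℕ) :
    Finset V :=
  s.filter (fun u => ∃ w : G.Walk v u, w.length ≤ r ∧ ∀ x ∈ w.support, x ∈ s)

lemma mem_sWalkBall {V : Type} {G : SimpleGraph V} {s : Finset V} {v u : V} {r : ℕ} :
    u ∈ sWalkBall G s v r ↔ u ∈ s ∧ ∃ w : G.Walk v u, w.length ≤ r ∧ ∀ x ∈ w.support, x ∈ s := by
  simp [sWalkBall]

lemma greedy {V : Type} (G : SimpleGraph V) (K : ℕ) (hK : 1 ≤ K)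
    (q : ℝ) (hq : 1 ≤ q)
    (hshort : ∀ (v : V) (w : G.Walk v v), Odd w.length → w.length ≤ 2 * K - 1 → False)
    (hball : ∀ (s : Finset V) (v : V), ((sWalkBall G s v K).card : ℝ) ≤ q ^ K) :
    ∀ (N : ℕ) (s : Finset V), s.card ≤ N → ∃ X : Finset V, X ⊆ s ∧
      (s.card : ℝ) ≤ q * X.card ∧ ∃ c : V → Bool, ∀ x ∈ X, ∀ y ∈ X, G.Adj x y → c x ≠ c y := by
  classical
  intro N
  induction N with
  | zero =>
    intro s hs
    rw [Nat.le_zero, Finset.card_eq_zero] at hs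
    subst hs
    exact ⟨∅, Finset.Subset.refl _, by simp, fun _ => true, by simp⟩
  | succ N ih =>
    intro s hs
    rcases s.eq_empty_or_nonempty with rfl | ⟨v, hv⟩
    · exact ⟨∅, Finset.Subset.refl _, by simp, fun _ => true, by simp⟩
    set B : ℕ → Finset V := fun r => sWalkBall G s v r with hB
    have hv0 : v ∈ B 0 := by
      rw [hB, mem_sWalkBall]
      exact ⟨hv, Walk.nil, by simp, by simp [hv]⟩
    have hBs : ∀ r, B r ⊆ s := fun r => Finset.filter_subset _ _
    have hmono : ∀ a b : ℕ, a ≤ b → B a ⊆ B b := by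
      intro a b hab u hu
      rw [hB, mem_sWalkBall] at hu ⊢
      obtain ⟨hus, w, hw, hws⟩ := hu
      exact ⟨hus, w, hw.trans hab, hws⟩
    have hstep : ∀ (r : ℕ) (x y : V), x ∈ B r → G.Adj x y → y ∈ s → y ∈ B (r + 1) := by
      intro r x y hxB hadj hys
      rw [hB, mem_sWalkBall] at hxB ⊢
      obtain ⟨hxs, w, hw, hws⟩ := hxB
      refine ⟨hys, w.concat hadj, ?_, ?_⟩
      · rw [Walk.length_concat]; omega
      · intro z hz
        rw [Walk.support_concat, List.mem_append] at hz
        rcases hz with hz | hz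
        · exact hws z hz
        · rw [List.mem_singleton] at hz; subst hz; exact hys
    -- find a radius with small expansion
    have hex : ∃ r : ℕ, r + 1 ≤ K ∧ ((B (r + 1)).card : ℝ) ≤ q * (B r).card := by
      by_contra hc
      push_neg at hc
      have grow : ∀ j : ℕ, j ≤ K → (q : ℝ) ^ j ≤ (B j).card := by
        intro j
        induction j with
        | zero =>
          intro _
          have h1 : 1 ≤ (B 0).card := Finset.card_pos.2 ⟨v, hv0⟩
          have : (1:ℝ) ≤ ((B 0).card : ℝ) := by exact_mod_cast h1
          simpa using this
        | succ j ihj =>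
          intro hjK
          have h1 : (q : ℝ) ^ j ≤ (B j).card := ihj (by omega)
          have h2 : q * (B j).card < (B (j + 1)).card := hc j (by omega)
          calc (q : ℝ) ^ (j + 1) = q * q ^ j := by ring
          _ ≤ q * (B j).card := by
              apply mul_le_mul_of_nonneg_left h1 (by linarith)
          _ ≤ (B (j + 1)).card := h2.le
      obtain ⟨K', rfl⟩ : ∃ K', K = K' + 1 := ⟨K - 1, by omega⟩
      have h1 : (q : ℝ) ^ K' ≤ (B K').card := grow K' (by omega)
      have h2 : q * (B K').card < (B (K' + 1)).card := hc K' le_rfl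
      have h3 : ((B (K' + 1)).card : ℝ) ≤ q ^ (K' + 1) := hball s v
      have h4 : (q : ℝ) ^ (K' + 1) = q * q ^ K' := by ring
      nlinarith [pow_nonneg (by linarith : (0:ℝ) ≤ q) K']
    obtain ⟨r, hrK, hr⟩ := hex
    set s' := s \ B (r + 1) with hs'def
    have hvB : v ∈ B (r + 1) := hmono 0 (r + 1) (by omega) hv0
    have hs'card : s'.card ≤ N := by
      have h1 : (B (r + 1)).card ≤ s.card := Finset.card_le_card (hBs _)
      have h2 : s'.card = s.card - (B (r + 1)).card := Finset.card_sdiff_of_subset (hBs _)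
      have h3 : 1 ≤ (B (r + 1)).card := Finset.card_pos.2 ⟨v, hvB⟩
      omega
    obtain ⟨X', hX's, hX'card, c', hc'⟩ := ih s' hs'card
    -- the distance function within s
    set dd : V → ℕ := fun u =>
      sInf {ℓ : ℕ | ∃ w : G.Walk v u, w.length = ℓ ∧ ∀ x ∈ w.support, x ∈ s} with hdd
    have hdmem : ∀ (u : V) (r' : ℕ), u ∈ B r' →
        dd u ≤ r' ∧ ∃ w : G.Walk v u, w.length = dd u ∧ ∀ x ∈ w.support, x ∈ s := by
      intro u r' hu
      rw [hB, mem_sWalkBall] at hu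
      obtain ⟨hus, w, hw, hws⟩ := hu
      have hne : {ℓ : ℕ | ∃ w : G.Walk v u, w.length = ℓ ∧ ∀ x ∈ w.support, x ∈ s}.Nonempty :=
        ⟨w.length, w, rfl, hws⟩
      constructor
      · exact le_trans (Nat.sInf_le ⟨w, rfl, hws⟩) hw
      · exact Nat.sInf_mem hne
    refine ⟨B r ∪ X', ?_, ?_, ?_⟩
    · intro u hu
      rcases Finset.mem_union.1 hu with hu | hu
      · exact hBs r hu
      · exact (Finset.sdiff_subset) (hX's hu)
    · have hdisj : Disjoint (B r) X' := by
        rw [Finset.disjoint_left]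
        intro a ha ha'
        have : a ∈ s' := hX's ha'
        rw [hs'def, Finset.mem_sdiff] at this
        exact this.2 (hmono r (r + 1) (by omega) ha)
      have hcardu : ((B r ∪ X').card : ℝ) = (B r).card + X'.card := by
        rw [Finset.card_union_of_disjoint hdisj]
        push_cast
        ring
      have hscard : (s.card : ℝ) ≤ (B (r + 1)).card + s'.card := by
        have h2 : s'.card = s.card - (B (r + 1)).card := Finset.card_sdiff_of_subset (hBs _)
        have h1 : (B (r + 1)).card ≤ s.card := Finset.card_le_card (hBs _)
        have : s.card = (B (r+1)).card + s'.card := by omega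
        exact_mod_cast this.le
      calc (s.card : ℝ) ≤ (B (r + 1)).card + s'.card := hscard
      _ ≤ q * (B r).card + q * X'.card := add_le_add hr hX'card
      _ = q * ((B r ∪ X').card) := by rw [hcardu]; ring
    · refine ⟨fun u => if u ∈ B r then decide (dd u % 2 = 1) else c' u, ?_⟩
      intro x hx y hy hadj
      have hxcase := Finset.mem_union.1 hx
      have hycase := Finset.mem_union.1 hy
      have hX'notB : ∀ a ∈ X', a ∉ B r := by
        intro a ha haB
        have : a ∈ s' := hX's ha
        rw [hs'def, Finset.mem_sdiff] at this
        exact this.2 (hmono r (r + 1) (by omega) haB)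
      have hcross : ∀ a b : V, a ∈ B r → b ∈ X' → G.Adj a b → False := by
        intro a b haB hbX' hab
        have hbs : b ∈ s := by
          have := hX's hbX'
          rw [hs'def, Finset.mem_sdiff] at this
          exact this.1
        have : b ∈ B (r + 1) := hstep r a b haB hab hbs
        have hb' : b ∈ s' := hX's hbX'
        rw [hs'def, Finset.mem_sdiff] at hb'
        exact hb'.2 this
      rcases hxcase with hxB | hxX'
      · rcases hycase with hyB | hyX'
        · -- both in B r : parity argument
          obtain ⟨hdx, wx, hwxlen, hwxsup⟩ := hdmem x r hxB
          obtain ⟨hdy, wy, hwylen, hwysup⟩ := hdmem y r hyB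
          have hxs : x ∈ s := hBs r hxB
          have hys : y ∈ s := hBs r hyB
          have hba : dd y ≤ dd x + 1 := by
            apply Nat.sInf_le
            refine ⟨wx.concat hadj, by rw [Walk.length_concat, hwxlen], ?_⟩
            intro z hz
            rw [Walk.support_concat, List.mem_append] at hz
            rcases hz with hz | hz
            · exact hwxsup z hz
            · rw [List.mem_singleton] at hz; subst hz; exact hys
          have hab : dd x ≤ dd y + 1 := by
            apply Nat.sInf_le
            refine ⟨wy.concat hadj.symm, by rw [Walk.length_concat, hwylen], ?_⟩
            intro z hz
            rw [Walk.support_concat, List.mem_append] at hz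
            rcases hz with hz | hz
            · exact hwysup z hz
            · rw [List.mem_singleton] at hz; subst hz; exact hxs
          have hne : dd x ≠ dd y := by
            intro heq
            have hww : ((wx.concat hadj).append wy.reverse).length = 2 * dd x + 1 := by
              rw [Walk.length_append, Walk.length_concat, Walk.length_reverse,
                hwxlen, hwylen, ← heq]
              ring
            apply hshort v ((wx.concat hadj).append wy.reverse)
            · rw [hww]; exact ⟨dd x, by ring⟩
            · rw [hww]; omega
          simp only [if_pos hxB, if_pos hyB]
          have : dd x % 2 ≠ dd y % 2 := by omega
          simp only [ne_eq, decide_eq_decide]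
          omega
        · exact absurd hadj (fun h => hcross x y hxB hyX' h)
      · rcases hycase with hyB | hyX'
        · exact absurd hadj.symm (fun h => hcross y x hyB hxX' h)
        · simp only [if_neg (hX'notB x hxX'), if_neg (hX'notB y hyX')]
          exact hc' x hxX' y hyX' hadj

theorem stmt_7 {V : Type} [Fintype V] (G : SimpleGraph V) (n k : ℕ)
    (hn : 2 ≤ n) (hk : 2 ≤ k)
    (hG : NoShortOddCycles G k) (hchr : ¬ G.Colorable n)
    (hmin : ∀ (W : Type) (_ : Fintype W) (H : SimpleGraph W),
      NoShortOddCycles H k → Fintype.card W < Fintype.card V → H.Colorable n)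
    (d : ℕ) (hd : d = Finset.univ.sup (fun v : V => (ball G v (k - 1)).card)) :
    (d : ℝ) ^ ((1 : ℝ) / (k - 1)) / ((d : ℝ) ^ ((1 : ℝ) / (k - 1)) - 1) *
      ((fOdd (n - 2) k : ℝ) + 1) ≤ (Fintype.card V : ℝ) := by
  classical
  set K : ℕ := k - 1 with hKdef
  have hK1 : 1 ≤ K := by omega
  set q : ℝ := (d : ℝ) ^ ((1 : ℝ) / ((k : ℝ) - 1)) with hqdef
  -- there is an edge
  obtain ⟨x, y, hxy⟩ : ∃ x y, G.Adj x y := by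
    by_contra h
    push_neg at h
    exact hchr ⟨SimpleGraph.Coloring.mk (fun _ => (⟨0, by omega⟩ : Fin n))
      (fun {a b} hab => absurd hab (h a b))⟩
  have hd2 : 2 ≤ d := by
    have hsub : ({x, y} : Finset V) ⊆ ball G x K := by
      intro z hz
      rw [Finset.mem_insert, Finset.mem_singleton] at hz
      rw [ball, Finset.mem_filter]
      refine ⟨Finset.mem_univ _, ?_⟩
      rcases hz with rfl | rfl
      · simp [SimpleGraph.dist_self]
      · have h1 : G.dist x z ≤ 1 := by
          have := SimpleGraph.dist_le (Walk.cons hxy Walk.nil)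
          simpa using this
        omega
    have h2 : 2 ≤ (ball G x K).card := by
      have := Finset.card_le_card hsub
      rwa [Finset.card_pair hxy.ne] at this
    rw [hd]
    exact le_trans h2 (Finset.le_sup (f := fun v => (ball G v K).card) (Finset.mem_univ x))
  have hdr : (1 : ℝ) < (d : ℝ) := by exact_mod_cast hd2
  have hkr : (0 : ℝ) < (k : ℝ) - 1 := by
    have : (2 : ℝ) ≤ (k : ℝ) := by exact_mod_cast hk
    linarith
  have hq1 : 1 < q := by
    rw [hqdef]
    rw [Real.one_lt_rpow_iff_of_pos (by linarith)]
    left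
    exact ⟨hdr, by positivity⟩
  have hqK : q ^ K = (d : ℝ) := by
    rw [hqdef, ← Real.rpow_natCast ((d:ℝ) ^ ((1:ℝ)/((k:ℝ)-1))) K, ← Real.rpow_mul (by linarith)]
    have hKcast : ((K : ℕ) : ℝ) = (k : ℝ) - 1 := by
      rw [hKdef]
      push_cast [Nat.cast_sub (by omega : 1 ≤ k)]
      ring
    rw [hKcast, one_div, inv_mul_cancel₀ (by linarith), Real.rpow_one]
  have hshort : ∀ (v : V) (w : G.Walk v v), Odd w.length → w.length ≤ 2 * K - 1 → False := by
    intro v w ho hle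
    obtain ⟨u, c, hc, hco, hclen⟩ := exists_odd_cycle w.length w ho le_rfl
    have := hG u c hc hco
    omega
  have hball : ∀ (s : Finset V) (v : V), ((sWalkBall G s v K).card : ℝ) ≤ q ^ K := by
    intro s v
    rw [hqK]
    have hsub : sWalkBall G s v K ⊆ ball G v K := by
      intro u hu
      rw [mem_sWalkBall] at hu
      obtain ⟨-, w, hw, -⟩ := hu
      rw [ball, Finset.mem_filter]
      exact ⟨Finset.mem_univ _, le_trans (SimpleGraph.dist_le w) (by omega)⟩
    have h1 : (sWalkBall G s v K).card ≤ d := by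
      refine le_trans (Finset.card_le_card hsub) ?_
      rw [hd]
      exact Finset.le_sup (f := fun v => (ball G v K).card) (Finset.mem_univ v)
    exact_mod_cast h1
  obtain ⟨X, hXuniv, hXcard, c, hc⟩ :=
    greedy G K hK1 q hq1.le hshort hball (Fintype.card V) Finset.univ (by simp)
  rw [Finset.card_univ] at hXcard
  -- the complement
  set Y : Finset V := Xᶜ with hY
  have hmemY : ∀ u : V, u ∉ X → u ∈ (↑Y : Set V) := by
    intro u hu
    simp [hY, hu]
  have hnocol : ¬ (G.induce (↑Y : Set V)).Colorable (n - 2) := by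
    rintro ⟨c₂⟩
    apply hchr
    refine ⟨SimpleGraph.Coloring.mk
      (fun u => if hu : u ∈ X then (⟨if c u then 0 else 1, by split <;> omega⟩ : Fin n)
        else (⟨(c₂ ⟨u, hmemY u hu⟩ : Fin (n - 2)).val + 2, by
          have := (c₂ ⟨u, hmemY u hu⟩).isLt
          omega⟩ : Fin n)) ?_⟩
    intro a b hab
    by_cases ha : a ∈ X <;> by_cases hb : b ∈ X
    · have hne := hc a ha b hb hab
      simp only [dif_pos ha, dif_pos hb]
      intro hcontra
      have h2 := congrArg Fin.val hcontra
      simp only at h2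
      cases hca : c a <;> cases hcb : c b <;> simp [hca, hcb] at h2 hne
    · simp only [dif_pos ha, dif_neg hb]
      intro hcontra
      have h2 := congrArg Fin.val hcontra
      simp only at h2
      split at h2 <;> omega
    · simp only [dif_neg ha, dif_pos hb]
      intro hcontra
      have h2 := congrArg Fin.val hcontra
      simp only at h2
      split at h2 <;> omega
    · simp only [dif_neg ha, dif_neg hb]
      intro hcontra
      have hadj' : (G.induce (↑Y : Set V)).Adj ⟨a, hmemY a ha⟩ ⟨b, hmemY b hb⟩ := by
        simp [SimpleGraph.comap]
        exact hab
      have hne := c₂.valid hadj'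
      have := congrArg Fin.val hcontra
      simp at this
      exact hne (Fin.ext this)
  have hNS : NoShortOddCycles (G.induce (↑Y : Set V)) k := by
    intro v w hcyc hodd
    have hinj := (SimpleGraph.Embedding.induce (↑Y : Set V) (G := G)).injective
    have hmap := hG _ (w.map (SimpleGraph.Embedding.induce (↑Y : Set V) (G := G)).toHom)
      ((Walk.map_isCycle_iff_of_injective hinj).2 hcyc)
      (by rwa [Walk.length_map])
    rwa [Walk.length_map] at hmap
  have hcardY : fOdd (n - 2) k + 1 ≤ Y.card := by
    by_contra hcon
    push_neg at hcon
    have hle : Fintype.card (↑Y : Set V) ≤ fOdd (n - 2) k := by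
      have hcoe : Fintype.card (↑Y : Set V) = Y.card := by
        simp
      omega
    exact hnocol (fOdd_spec hle _ inferInstance _ hNS le_rfl)
  have hYX : Y.card = Fintype.card V - X.card := Finset.card_compl X
  have hXle : X.card ≤ Fintype.card V := Finset.card_le_univ X
  have hf : (fOdd (n - 2) k : ℝ) + 1 + (X.card : ℝ) ≤ (Fintype.card V : ℝ) := by
    have hnat : fOdd (n - 2) k + 1 + X.card ≤ Fintype.card V := by omega
    exact_mod_cast hnat
  have h1 : 0 < q - 1 := by linarith
  have hgoal : q * ((fOdd (n - 2) k : ℝ) + 1) ≤ (Fintype.card V : ℝ) * (q - 1) := by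
    have hq0 : (0 : ℝ) ≤ q := by linarith
    nlinarith [mul_le_mul_of_nonneg_left hf hq0, hXcard]
  calc q / (q - 1) * ((fOdd (n - 2) k : ℝ) + 1)
      = q * ((fOdd (n - 2) k : ℝ) + 1) / (q - 1) := by ring
  _ ≤ (Fintype.card V : ℝ) := by
      rw [div_le_iff₀ h1]
      exact hgoal
end
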